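/- Every natural rate below the debt bound lies below the complete-markets rate, and high-productivity stationary consumption exceeds low-productivity stationary consumption: if 0 ≤ b < bmax, r > −1, Dh(b,r) > 0, Dl(b,r) > 0 and F(b,r) = 0, then r < iss and w − (1−β)·(1+r)·b > 0 (equivalently Dh(b,r) > Dl(b,r)). (Conditions (ae:c_cond) and (ae:c_cond2) established in the proof of Proposition 3.) -/

import Mathlib

/-- High-productivity stationary consumption denominator:
Dh(b,r) = w·zh + (1−β)·(1+r)·b·(1−zh) with w = (ε−1)/ε. -/
noncomputable def Dh (β ε zh : ℝ) (b r : ℝ) : ℝ :=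
  ((ε - 1) / ε) * zh + (1 - β) * (1 + r) * b * (1 - zh)

/-- Low-productivity stationary consumption denominator:
Dl(b,r) = w·zl + (1−β)·(1+r)·b·(1−zl) with w = (ε−1)/ε. -/
noncomputable def Dl (β ε zl : ℝ) (b r : ℝ) : ℝ :=
  ((ε - 1) / ε) * zl + (1 - β) * (1 + r) * b * (1 - zl)

/-- Natural-rate equation residual:
F(b,r) = β·ρ·(1+r)/Dh(b,r) + β·(1−ρ)·(1+r)/Dl(b,r) − ε/(ε−1). -/
noncomputable def F (β ε ρ zh zl : ℝ) (b r : ℝ) : ℝ :=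
  β * ρ * (1 + r) / Dh β ε zh b r
    + β * (1 - ρ) * (1 + r) / Dl β ε zl b r
    - ε / (ε - 1)

/-- Conditions (ae:c_cond) and (ae:c_cond2) in the proof of Proposition 3:
every natural rate below the debt bound lies below the complete-markets rate,
and high-productivity stationary consumption exceeds low-productivity
stationary consumption. -/
theorem stmt_12 (β ε ρ zh zl : ℝ)
    (hβ0 : 0 < β) (hβ1 : β < 1) (hε : 1 < ε)
    (hρ0 : 0 < ρ) (hρ1 : ρ < 1)
    (hzl0 : 0 < zl) (hzl1 : zl < 1) (hzh : 1 < zh)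
    (hmean : ρ * zh + (1 - ρ) * zl = 1) :
    ∀ b r : ℝ, 0 ≤ b → b < ((ε - 1) / ε) * (β / (1 - β)) →
      r > -1 → Dh β ε zh b r > 0 → Dl β ε zl b r > 0 →
      F β ε ρ zh zl b r = 0 →
      r < (1 - β) / β ∧
      (ε - 1) / ε - (1 - β) * (1 + r) * b > 0 ∧
      Dh β ε zh b r > Dl β ε zl b r := by
  intro b r hb hbmax hr hDh hDl hF
  set a := Dh β ε zh b r with ha
  set c := Dl β ε zl b r with hc
  have hε0 : (0:ℝ) < ε := by linarith
  have hε1 : (0:ℝ) < ε - 1 := by linarith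
  have hw : (0:ℝ) < (ε - 1) / ε := div_pos hε1 hε0
  have hmean2 : ρ * a + (1 - ρ) * c = (ε - 1) / ε := by
    simp only [ha, hc, Dh, Dl]
    linear_combination (((ε - 1) / ε) - (1 - β) * (1 + r) * b) * hmean
  have hac : a - c = ((ε - 1) / ε - (1 - β) * (1 + r) * b) * (zh - zl) := by
    simp only [ha, hc, Dh, Dl]; ring
  have hane : a ≠ 0 := ne_of_gt hDh
  have hcne : c ≠ 0 := ne_of_gt hDl
  have heq : β * (1 + r) * (ρ * c + (1 - ρ) * a) * ((ε - 1) / ε) = a * c := by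
    have hF' := hF
    simp only [F] at hF'
    rw [← ha, ← hc] at hF'
    field_simp at hF'
    field_simp
    linarith [hF']
  rw [← hmean2] at heq
  -- heq : β * (1+r) * (ρc + (1-ρ)a) * (ρa + (1-ρ)c) = a*c
  have h1r : (0:ℝ) < 1 + r := by linarith
  have hrlt : r < (1 - β) / β := by
    by_contra h
    push_neg at h
    have hβr : 1 ≤ β * (1 + r) := by
      rw [div_le_iff₀ hβ0] at h; nlinarith
    have hid : β * (1 + r) * (a * c + ρ * (1 - ρ) * (a - c) ^ 2) = a * c := by
      linear_combination heq
    have hQ0 : (0:ℝ) ≤ ρ * (1 - ρ) * (a - c) ^ 2 := by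
      have : (0:ℝ) ≤ 1 - ρ := by linarith
      positivity
    have hprod : (0:ℝ) ≤ (β * (1 + r) - 1) * (a * c + ρ * (1 - ρ) * (a - c) ^ 2) := by
      apply mul_nonneg (by linarith)
      linarith [mul_pos hDh hDl]
    have hQ : ρ * (1 - ρ) * (a - c) ^ 2 = 0 := by linarith [hid, hprod, hQ0]
    have haceq : a = c := by
      have hρρ : 0 < ρ * (1 - ρ) := mul_pos hρ0 (by linarith)
      have hsq : (a - c) ^ 2 = 0 := by
        rcases mul_eq_zero.mp hQ with h' | h'
        · exact absurd h' (ne_of_gt hρρ)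
        · exact h'
      have := pow_eq_zero_iff (n := 2) (by norm_num) |>.mp hsq
      linarith
    have hβr1 : β * (1 + r) = 1 := by
      have h2 : β * (1 + r) * (a * c) = 1 * (a * c) := by
        linear_combination hid - β * (1 + r) * hQ
      exact mul_right_cancel₀ (mul_ne_zero hane hcne) h2
    -- so (1-β)(1+r)b = w, contradicting b < bmax
    have hzz : (0:ℝ) < zh - zl := by linarith
    have h1β : (0:ℝ) < 1 - β := by linarith
    have hX : (ε - 1) / ε - (1 - β) * (1 + r) * b = 0 := by
      have h0 : ((ε - 1) / ε - (1 - β) * (1 + r) * b) * (zh - zl) = 0 := by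
        rw [← hac]; linarith
      rcases mul_eq_zero.mp h0 with h' | h'
      · exact h'
      · exact absurd h' (ne_of_gt hzz)
    have hb2 : b * (1 - β) < (ε - 1) / ε * β := by
      have h2 := mul_lt_mul_of_pos_right hbmax h1β
      calc b * (1 - β) < ((ε - 1) / ε * (β / (1 - β))) * (1 - β) := h2
        _ = (ε - 1) / ε * β := by field_simp
    have hcontra : (ε - 1) / ε * β = (1 - β) * b := by
      linear_combination β * hX + (1 - β) * b * hβr1
    linarith
  have h1β : (0:ℝ) < 1 - β := by linarith
  have hβr : β * (1 + r) < 1 := by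
    rw [lt_div_iff₀ hβ0] at hrlt; nlinarith
  have hb2 : b * (1 - β) < (ε - 1) / ε * β := by
    have h2 := mul_lt_mul_of_pos_right hbmax h1β
    calc b * (1 - β) < ((ε - 1) / ε * (β / (1 - β))) * (1 - β) := h2
      _ = (ε - 1) / ε * β := by field_simp
  have hX : (ε - 1) / ε - (1 - β) * (1 + r) * b > 0 := by
    rcases eq_or_lt_of_le hb with hb0 | hb0
    · rw [← hb0]; simpa using hw
    · have h3 : (1 - β) * b * (β * (1 + r)) < (1 - β) * b * 1 :=
        mul_lt_mul_of_pos_left hβr (mul_pos h1β hb0)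
      have hXb : ((1 - β) * (1 + r) * b) * β < ((ε - 1) / ε) * β := by
        linarith [h3, hb2]
      have := lt_of_mul_lt_mul_right hXb hβ0.le
      linarith
  refine ⟨hrlt, hX, ?_⟩
  have : a - c > 0 := by
    rw [hac]; exact mul_pos hX (by linarith)
  linarith
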